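/- Let Ω ⊆ ℝⁿ be a bounded domain, β ∈ (1/2, 1), and D ∈ C⁰(closure(Ω); ℝ^{n×n}) positive semidefinite with ∇·D ∈ L¹(Ω;ℝⁿ). If there exists C ≥ 0 such that ∫_Ω |(∇·D)·Φ| ≤ C(∫_Ω |Φ · D Φ|^β + 1) for all continuous Φ : closure(Ω) → ℝⁿ, then ∇·D ∈ L^{2β/(2β-1)}(Ω; ℝⁿ), and in particular ∇·D ∈ L²(Ω;ℝⁿ). -/

import Mathlib

open MeasureTheory Real Matrix Filter
open scoped ENNReal Topology

lemma aux_rpow_add_one_le {A θ : ℝ} (hA : 0 ≤ A) (hθ0 : 0 ≤ θ) (hθ1 : θ ≤ 1) :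
    (A + 1) ^ θ ≤ A ^ θ + 1 := by
  have h := NNReal.rpow_add_le_add_rpow (A.toNNReal) 1 hθ0 hθ1
  have h2 := NNReal.coe_le_coe.2 h
  push_cast at h2
  simpa [Real.coe_toNNReal A hA, Real.one_rpow] using h2

-- helper 2 : truncation is 1-Lipschitz
lemma aux_trunc_lip (K a b : ℝ) :
    |max (-K) (min K a) - max (-K) (min K b)| ≤ |a - b| := by
  calc |max (-K) (min K a) - max (-K) (min K b)|
      = |max (min K a) (-K) - max (min K b) (-K)| := by rw [max_comm (-K), max_comm (-K)]
    _ ≤ |min K a - min K b| := abs_max_sub_max_le_abs _ _ _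
    _ ≤ max |K - K| |a - b| := abs_min_sub_min_le_max K a K b
    _ = |a - b| := by simp

-- helper 3 : self-improving bound
lemma aux_self_bound {X c θ : ℝ} (hX : 0 ≤ X) (hθ0 : 0 < θ) (hθ1 : θ < 1)
    (h : X ≤ c * (X ^ θ + 1)) :
    X ≤ max 1 ((2 * max c 1) ^ (1 / (1 - θ))) := by
  rcases le_or_gt X 1 with hX1 | hX1
  · exact hX1.trans (le_max_left _ _)
  have hXpos : 0 < X := lt_trans zero_lt_one hX1
  have hXθ1 : 1 ≤ X ^ θ := Real.one_le_rpow hX1.le hθ0.le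
  have hc' : (1:ℝ) ≤ max c 1 := le_max_right _ _
  have h2 : X ≤ 2 * max c 1 * X ^ θ := by
    have : c * (X ^ θ + 1) ≤ max c 1 * (X ^ θ + 1) := by
      apply mul_le_mul_of_nonneg_right (le_max_left _ _)
      positivity
    nlinarith [this]
  have h3 : X ^ (1 - θ) ≤ 2 * max c 1 := by
    have hmul : X * X ^ (-θ) ≤ (2 * max c 1 * X ^ θ) * X ^ (-θ) :=
      mul_le_mul_of_nonneg_right h2 (Real.rpow_nonneg hXpos.le _)
    have e1 : X * X ^ (-θ) = X ^ (1 - θ) := by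
      rw [Real.rpow_sub hXpos, Real.rpow_one, Real.rpow_neg hXpos.le, div_eq_mul_inv]
    have e2 : (2 * max c 1 * X ^ θ) * X ^ (-θ) = 2 * max c 1 := by
      rw [mul_assoc, ← Real.rpow_add hXpos]
      simp
    rw [e1, e2] at hmul
    exact hmul
  have h4 : X = (X ^ (1 - θ)) ^ (1 / (1 - θ)) := by
    rw [← Real.rpow_mul hXpos.le]
    rw [mul_one_div, div_self (by linarith), Real.rpow_one]
  calc X = (X ^ (1 - θ)) ^ (1 / (1 - θ)) := h4
    _ ≤ (2 * max c 1) ^ (1 / (1 - θ)) := by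
        apply Real.rpow_le_rpow (Real.rpow_nonneg hXpos.le _) h3
        have : 0 < 1 - θ := by linarith
        positivity
    _ ≤ _ := le_max_right _ _

-- helper 4 : | |a|^r * a | = |a| ^ (r+1), for r > 0 exponent handled
lemma aux_abs_rpow_mul {a r : ℝ} (hr : 0 < r) : |(|a| ^ r * a)| = |a| ^ (r + 1) := by
  rcases eq_or_ne a 0 with rfl | ha
  · simp [Real.zero_rpow hr.ne', Real.zero_rpow (by linarith : r + 1 ≠ 0)]
  · rw [abs_mul, abs_of_nonneg (Real.rpow_nonneg (abs_nonneg a) r),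
      Real.rpow_add_one (abs_ne_zero.2 ha)]

lemma scalarDual {n : ℕ} {Ω : Set (Fin n → ℝ)} (hΩm : MeasurableSet Ω)
    (hvol : volume Ω < ∞) {β : ℝ} (hβ1 : 1/2 < β) (hβ2 : β < 1)
    {g : (Fin n → ℝ) → ℝ} (hg : IntegrableOn g Ω) {c : ℝ}
    (H : ∀ (K : ℝ) (φ : (Fin n → ℝ) → ℝ), Continuous φ → (∀ x, |φ x| ≤ K) →
      ∫ x in Ω, |g x * φ x| ≤ c * ((∫ x in Ω, |φ x| ^ (2*β)) ^ (1/(2*β)) + 1)) :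
    MemLp g (ENNReal.ofReal (2*β/(2*β-1))) (volume.restrict Ω) := by
  set μ := volume.restrict Ω with hμdef
  haveI : IsFiniteMeasure μ := ⟨by rwa [hμdef, Measure.restrict_apply_univ]⟩
  have hb0 : (0:ℝ) < 2*β - 1 := by linarith
  have hbpos : (0:ℝ) < 2*β := by linarith
  set q : ℝ := 2*β/(2*β-1) with hqdef
  have hq2 : 2 < q := by rw [hqdef, lt_div_iff₀ hb0]; nlinarith
  have hq0 : (0:ℝ) < q := by linarith
  set θ : ℝ := 1/(2*β) with hθdef
  have hθ0 : 0 < θ := by positivity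
  have hθ1 : θ < 1 := by rw [hθdef, div_lt_one hbpos]; linarith
  have hq1 : (q - 1) * (2*β) = q := by rw [hqdef]; field_simp; ring
  obtain ⟨g', hg'm, hgg'⟩ := hg.1
  have hg'i : Integrable g' μ := hg.congr hgg'
  have hg'meas : Measurable g' := hg'm.measurable
  set B : ℝ := max 1 ((2 * max c 1) ^ (1/(1-θ))) with hBdef
  -- truncations
  set T : ℕ → (Fin n → ℝ) → ℝ := fun k => ({x | |g' x| ≤ (k:ℝ)}.indicator g') with hTdef
  have hTmeas : ∀ k, Measurable (T k) := fun k =>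
    hg'meas.indicator (measurableSet_le hg'meas.abs measurable_const)
  have hTb : ∀ k x, |T k x| ≤ (k:ℝ) := by
    intro k x
    by_cases hx : x ∈ {x | |g' x| ≤ (k:ℝ)}
    · rw [hTdef]; simp only [Set.indicator_of_mem hx]; exact hx
    · rw [hTdef]; simp only [Set.indicator_of_notMem hx, abs_zero]; positivity
  have hTint : ∀ k, Integrable (fun x => |T k x| ^ q) μ := by
    intro k
    apply Integrable.mono' (integrable_const ((k:ℝ) ^ q))
      (((hTmeas k).abs.pow measurable_const).aestronglyMeasurable)
    filter_upwards with x
    rw [Real.norm_eq_abs, abs_of_nonneg (Real.rpow_nonneg (abs_nonneg _) _)]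
    exact Real.rpow_le_rpow (abs_nonneg _) (hTb k x) hq0.le
  -- the key uniform bound
  have key : ∀ k : ℕ, ∫ x, |T k x| ^ q ∂μ ≤ B := by
    intro k
    set K : ℝ := (k:ℝ) ^ (q - 1) with hKdef
    have hK0 : 0 ≤ K := Real.rpow_nonneg (Nat.cast_nonneg k) _
    set ψ₀ : (Fin n → ℝ) → ℝ := fun x => |T k x| ^ (q-2) * T k x with hψ₀def
    have hψ₀m : Measurable ψ₀ := ((hTmeas k).abs.pow measurable_const).mul (hTmeas k)
    have hψ₀b : ∀ x, |ψ₀ x| ≤ K := by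
      intro x
      rw [hψ₀def]
      simp only
      rw [aux_abs_rpow_mul (by linarith : (0:ℝ) < q - 2)]
      have he : q - 2 + 1 = q - 1 := by ring
      rw [he, hKdef]
      exact Real.rpow_le_rpow (abs_nonneg _) (hTb k x) (by linarith)
    set ψ : (Fin n → ℝ) → ℝ := Ω.indicator ψ₀ with hψdef
    have hψm : Measurable ψ := hψ₀m.indicator hΩm
    have hψb : ∀ x, |ψ x| ≤ K := by
      intro x
      by_cases hx : x ∈ Ω
      · rw [hψdef]; simp only [Set.indicator_of_mem hx]; exact hψ₀b x
      · rw [hψdef]; simp only [Set.indicator_of_notMem hx, abs_zero]; exact hK0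
    have hψae : ψ =ᵐ[μ] ψ₀ := by
      rw [hμdef, hψdef]
      exact indicator_ae_eq_restrict hΩm
    set p2 : ℝ≥0∞ := ENNReal.ofReal (2*β) with hp2def
    have hp2ne0 : p2 ≠ 0 := (ENNReal.ofReal_pos.2 hbpos).ne'
    have hp2net : p2 ≠ ∞ := ENNReal.ofReal_ne_top
    have hψmem : MemLp ψ p2 volume := by
      rw [hψdef, memLp_indicator_iff_restrict hΩm]
      exact MemLp.of_bound hψ₀m.aestronglyMeasurable K
        (Filter.Eventually.of_forall fun x => by simpa [Real.norm_eq_abs] using hψ₀b x)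
    have hsel : ∀ j : ℕ, ∃ φ : (Fin n → ℝ) → ℝ, Continuous φ ∧
        eLpNorm (ψ - φ) p2 volume ≤ ((j:ℝ≥0∞)+1)⁻¹ := by
      intro j
      obtain ⟨φ, -, hle, hcont, -⟩ := hψmem.exists_hasCompactSupport_eLpNorm_sub_le hp2net
        (ε := ((j:ℝ≥0∞)+1)⁻¹) (by simp)
      exact ⟨φ, hcont, hle⟩
    choose φs hφc hφle using hsel
    set Φ : ℕ → (Fin n → ℝ) → ℝ := fun j x => max (-K) (min K (φs j x)) with hΦdef
    have hΦc : ∀ j, Continuous (Φ j) := fun j =>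
      continuous_const.max (continuous_const.min (hφc j))
    have hΦb : ∀ j x, |Φ j x| ≤ K := by
      intro j x
      rw [abs_le, hΦdef]
      exact ⟨le_max_left _ _, max_le (by linarith) (min_le_left _ _)⟩
    have hΦψ : ∀ j x, |Φ j x - ψ x| ≤ |ψ x - φs j x| := by
      intro j x
      have hfix : ψ x = max (-K) (min K (ψ x)) := by
        rcases abs_le.1 (hψb x) with ⟨h1, h2⟩
        rw [min_eq_right h2, max_eq_right h1]
      calc |Φ j x - ψ x| = |max (-K) (min K (φs j x)) - max (-K) (min K (ψ x))| := by
            rw [← hfix]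
        _ ≤ |φs j x - ψ x| := aux_trunc_lip K _ _
        _ = |ψ x - φs j x| := abs_sub_comm _ _
    have hconv : Tendsto (fun j => eLpNorm (Φ j - ψ) p2 μ) atTop (𝓝 0) := by
      have hbound : ∀ j, eLpNorm (Φ j - ψ) p2 μ ≤ ((j:ℝ≥0∞)+1)⁻¹ := by
        intro j
        calc eLpNorm (Φ j - ψ) p2 μ ≤ eLpNorm (ψ - φs j) p2 μ :=
              eLpNorm_mono fun x => by
                simpa [Real.norm_eq_abs, Pi.sub_apply] using hΦψ j x
          _ ≤ eLpNorm (ψ - φs j) p2 volume := eLpNorm_mono_measure _ Measure.restrict_le_self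
          _ ≤ _ := hφle j
      have h0 : Tendsto (fun j : ℕ => ((j:ℝ≥0∞)+1)⁻¹) atTop (𝓝 0) := by
        have h0' := ENNReal.tendsto_inv_nat_nhds_zero.comp (tendsto_add_atTop_nat 1)
        refine h0'.congr fun j => ?_
        simp only [Function.comp_apply]
        norm_cast
      exact tendsto_of_tendsto_of_tendsto_of_le_of_le tendsto_const_nhds h0
        (fun j => zero_le) hbound
    obtain ⟨ns, -, hae⟩ := (tendstoInMeasure_of_tendsto_eLpNorm hp2ne0
      (fun j => (hΦc j).aestronglyMeasurable) hψm.aestronglyMeasurable hconv).exists_seq_tendsto_ae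
    set Xk : ℝ := ∫ x, |T k x| ^ q ∂μ with hXkdef
    have hXk0 : 0 ≤ Xk := integral_nonneg fun x => Real.rpow_nonneg (abs_nonneg _) _
    have hgψ : ∀ x, g' x * ψ₀ x = |T k x| ^ q := by
      intro x
      by_cases hx : x ∈ {x | |g' x| ≤ (k:ℝ)}
      · have hTx : T k x = g' x := by rw [hTdef]; exact Set.indicator_of_mem hx _
        rw [hψ₀def]
        simp only [hTx]
        rcases eq_or_ne (g' x) 0 with h0 | h0
        · simp [h0, Real.zero_rpow hq0.ne']
        · have h1 : |g' x| ≠ 0 := abs_ne_zero.2 h0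
          calc g' x * (|g' x| ^ (q-2) * g' x)
              = (|g' x| ^ (q-2) * |g' x|) * |g' x| := by rw [mul_assoc, abs_mul_abs_self]; ring
            _ = |g' x| ^ (q-2+1+1) := by
                rw [← Real.rpow_add_one h1, ← Real.rpow_add_one h1]
            _ = |g' x| ^ q := by congr 1; ring
      · have hTx : T k x = 0 := by rw [hTdef]; exact Set.indicator_of_notMem hx _
        rw [hψ₀def]
        simp [hTx, Real.zero_rpow hq0.ne']
    have hψabs : ∀ x, |ψ₀ x| ^ (2*β) = |T k x| ^ q := by
      intro x
      have h1 : |ψ₀ x| = |T k x| ^ (q-1) := by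
        rw [hψ₀def]
        simp only
        rw [aux_abs_rpow_mul (by linarith : (0:ℝ) < q - 2)]
        congr 1; ring
      rw [h1, ← Real.rpow_mul (abs_nonneg _), hq1]
    have hval1 : ∫ x, g' x * ψ x ∂μ = Xk := by
      rw [hXkdef]
      refine integral_congr_ae ?_
      filter_upwards [hψae] with x hx
      rw [hx, hgψ x]
    have hval2 : ∫ x, |ψ x| ^ (2*β) ∂μ = Xk := by
      rw [hXkdef]
      refine integral_congr_ae ?_
      filter_upwards [hψae] with x hx
      rw [hx, hψabs x]
    have hpair : Tendsto (fun i => ∫ x, g' x * Φ (ns i) x ∂μ) atTop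
        (𝓝 (∫ x, g' x * ψ x ∂μ)) := by
      refine tendsto_integral_of_dominated_convergence (fun x => K * |g' x|)
        (fun i => hg'm.aestronglyMeasurable.mul (hΦc (ns i)).aestronglyMeasurable)
        (hg'i.abs.const_mul K) (fun i => Filter.Eventually.of_forall fun x => ?_) ?_
      · rw [Real.norm_eq_abs, abs_mul, mul_comm]
        exact mul_le_mul_of_nonneg_right (hΦb _ x) (abs_nonneg _)
      · filter_upwards [hae] with x hx
        exact hx.const_mul (g' x)
    have h2 : Tendsto (fun i => ∫ x, |Φ (ns i) x| ^ (2*β) ∂μ) atTop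
        (𝓝 (∫ x, |ψ x| ^ (2*β) ∂μ)) := by
      refine tendsto_integral_of_dominated_convergence (fun _ => K ^ (2*β))
        (fun i => (((hΦc (ns i)).abs.rpow_const fun x => Or.inr hbpos.le)).aestronglyMeasurable)
        (integrable_const _) (fun i => Filter.Eventually.of_forall fun x => ?_) ?_
      · rw [Real.norm_eq_abs, abs_of_nonneg (Real.rpow_nonneg (abs_nonneg _) _)]
        exact Real.rpow_le_rpow (abs_nonneg _) (hΦb _ x) hbpos.le
      · filter_upwards [hae] with x hx
        exact (hx.abs).rpow_const (Or.inr hbpos.le)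
    have hineq : ∀ i, ∫ x, g' x * Φ (ns i) x ∂μ ≤
        c * ((∫ x, |Φ (ns i) x| ^ (2*β) ∂μ) ^ θ + 1) := by
      intro i
      have e : ∫ x, |g' x * Φ (ns i) x| ∂μ = ∫ x, |g x * Φ (ns i) x| ∂μ := by
        refine integral_congr_ae ?_
        filter_upwards [hgg'] with x hx
        rw [hx]
      calc ∫ x, g' x * Φ (ns i) x ∂μ ≤ |∫ x, g' x * Φ (ns i) x ∂μ| := le_abs_self _
        _ ≤ ∫ x, |g' x * Φ (ns i) x| ∂μ := by
            have hni := norm_integral_le_integral_norm (μ := μ) (fun x => g' x * Φ (ns i) x)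
            simpa only [Real.norm_eq_abs] using hni
        _ = ∫ x, |g x * Φ (ns i) x| ∂μ := e
        _ ≤ c * ((∫ x, |Φ (ns i) x| ^ (2*β) ∂μ) ^ θ + 1) := by
            rw [hθdef]
            exact H K (Φ (ns i)) (hΦc _) (fun x => hΦb _ x)
    have hlimR : Tendsto (fun i => c * ((∫ x, |Φ (ns i) x| ^ (2*β) ∂μ) ^ θ + 1)) atTop
        (𝓝 (c * (Xk ^ θ + 1))) := by
      rw [← hval2]
      exact (((h2.rpow_const (Or.inr hθ0.le))).add_const 1).const_mul c
    have hXle : Xk ≤ c * (Xk ^ θ + 1) := by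
      have hpair' : Tendsto (fun i => ∫ x, g' x * Φ (ns i) x ∂μ) atTop (𝓝 Xk) := by
        rw [← hval1]; exact hpair
      exact le_of_tendsto_of_tendsto' hpair' hlimR hineq
    exact aux_self_bound hXk0 hθ0 hθ1 hXle
  -- pass to the limit k → ∞
  have hmono : ∀ x, Tendsto (fun k : ℕ => ENNReal.ofReal (|T k x| ^ q)) atTop
      (𝓝 (ENNReal.ofReal (|g' x| ^ q))) := by
    intro x
    apply tendsto_atTop_of_eventually_const (i₀ := ⌈|g' x|⌉₊)
    intro k hk
    have hx : x ∈ {x' | |g' x'| ≤ (k:ℝ)} := by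
      simp only [Set.mem_setOf_eq]
      exact (Nat.le_ceil _).trans (Nat.cast_le.2 hk)
    rw [hTdef]
    simp only [Set.indicator_of_mem hx]
  have hlint : ∫⁻ x, ENNReal.ofReal (|g' x| ^ q) ∂μ ≤ ENNReal.ofReal B := by
    have hmeas : ∀ k : ℕ, Measurable fun x => ENNReal.ofReal (|T k x| ^ q) :=
      fun k => ENNReal.measurable_ofReal.comp ((hTmeas k).abs.pow measurable_const)
    calc ∫⁻ x, ENNReal.ofReal (|g' x| ^ q) ∂μ
        = ∫⁻ x, liminf (fun k : ℕ => ENNReal.ofReal (|T k x| ^ q)) atTop ∂μ :=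
          lintegral_congr fun x => ((hmono x).liminf_eq).symm
      _ ≤ liminf (fun k => ∫⁻ x, ENNReal.ofReal (|T k x| ^ q) ∂μ) atTop :=
          lintegral_liminf_le hmeas
      _ ≤ ENNReal.ofReal B := by
          have hle : ∀ k : ℕ, ∫⁻ x, ENNReal.ofReal (|T k x| ^ q) ∂μ ≤ ENNReal.ofReal B := by
            intro k
            rw [← ofReal_integral_eq_lintegral_ofReal (hTint k)
              (Filter.Eventually.of_forall fun x => Real.rpow_nonneg (abs_nonneg _) _)]
            exact ENNReal.ofReal_le_ofReal (key k)
          calc liminf (fun k => ∫⁻ x, ENNReal.ofReal (|T k x| ^ q) ∂μ) atTop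
              ≤ liminf (fun _ : ℕ => ENNReal.ofReal B) atTop :=
                Filter.liminf_le_liminf (Filter.Eventually.of_forall hle)
            _ = ENNReal.ofReal B := Filter.liminf_const _
  have hmem' : MemLp g' (ENNReal.ofReal q) μ := by
    refine ⟨hg'm.aestronglyMeasurable, ?_⟩
    rw [eLpNorm_eq_lintegral_rpow_enorm_toReal (ENNReal.ofReal_pos.2 hq0).ne' ENNReal.ofReal_ne_top]
    rw [ENNReal.toReal_ofReal hq0.le]
    have hlint2 : ∫⁻ x, ‖g' x‖ₑ ^ q ∂μ ≤ ENNReal.ofReal B := by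
      refine le_trans (le_of_eq (lintegral_congr fun x => ?_)) hlint
      rw [Real.enorm_eq_ofReal_abs, ← ENNReal.ofReal_rpow_of_nonneg (abs_nonneg _) hq0.le]
    exact ENNReal.rpow_lt_top_of_nonneg (by positivity)
      (hlint2.trans_lt ENNReal.ofReal_lt_top).ne
  exact hmem'.ae_eq hgg'.symm


/-- the divergence estimate implies `∇·D ∈ L^{2β/(2β-1)} ⊆ L²`. -/
theorem stmt2 (n : ℕ) (Ω : Set (Fin n → ℝ)) (hΩ : IsOpen Ω) (hΩb : Bornology.IsBounded Ω)
    (β : ℝ) (hβ1 : 1/2 < β) (hβ2 : β < 1)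
    (D : (Fin n → ℝ) → Matrix (Fin n) (Fin n) ℝ)
    (hDc : ContinuousOn D (closure Ω))
    (hDpsd : ∀ x ∈ closure Ω, (D x).PosSemidef)
    (divD : (Fin n → ℝ) → (Fin n → ℝ))
    (hdivD : IntegrableOn divD Ω)
    (C : ℝ) (hC : 0 ≤ C)
    (hest : ∀ Φ : (Fin n → ℝ) → (Fin n → ℝ), ContinuousOn Φ (closure Ω) →
      ∫ x in Ω, |divD x ⬝ᵥ Φ x|
        ≤ C * ((∫ x in Ω, |Φ x ⬝ᵥ (D x).mulVec (Φ x)| ^ β) + 1)) :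
    MemLp divD (ENNReal.ofReal (2 * β / (2 * β - 1))) (volume.restrict Ω) ∧
      MemLp divD 2 (volume.restrict Ω) := by
  have hΩm : MeasurableSet Ω := hΩ.measurableSet
  have hvol : volume Ω < ⊤ := hΩb.measure_lt_top
  haveI : IsFiniteMeasure (volume.restrict Ω) := ⟨by rwa [Measure.restrict_apply_univ]⟩
  have hb0 : (0:ℝ) < 2*β - 1 := by linarith
  have hbpos : (0:ℝ) < 2*β := by linarith
  have hβ0 : (0:ℝ) < β := by linarith
  set θ : ℝ := 1/(2*β) with hθdef
  have hθ0 : 0 < θ := by positivity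
  have hθ1 : θ < 1 := by rw [hθdef, div_lt_one hbpos]; linarith
  -- Step A : the scaled estimate
  have hA : ∀ Φ : (Fin n → ℝ) → (Fin n → ℝ), ContinuousOn Φ (closure Ω) →
      ∫ x in Ω, |divD x ⬝ᵥ Φ x| ≤
        2*C * ((∫ x in Ω, |Φ x ⬝ᵥ (D x).mulVec (Φ x)| ^ β) ^ θ + 1) := by
    intro Φ hΦ
    set A := ∫ x in Ω, |Φ x ⬝ᵥ (D x).mulVec (Φ x)| ^ β with hAdef
    have hA0 : 0 ≤ A := integral_nonneg fun x => Real.rpow_nonneg (abs_nonneg _) _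
    have hA1 : (0:ℝ) < A + 1 := by linarith
    set t : ℝ := (A+1) ^ (-θ) with htdef
    have ht : 0 < t := Real.rpow_pos_of_pos hA1 _
    have hest' := hest (fun x => t • Φ x) (by exact (continuousOn_const (c := t)).smul hΦ)
    have hL : ∫ x in Ω, |divD x ⬝ᵥ (t • Φ x)| = t * ∫ x in Ω, |divD x ⬝ᵥ Φ x| := by
      rw [← integral_const_mul]
      refine integral_congr_ae (Filter.Eventually.of_forall fun x => ?_)
      show |divD x ⬝ᵥ (t • Φ x)| = t * |divD x ⬝ᵥ Φ x|
      rw [dotProduct_smul, smul_eq_mul, abs_mul, abs_of_pos ht]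
    have hR2 : ∫ x in Ω, |(t • Φ x) ⬝ᵥ (D x).mulVec (t • Φ x)| ^ β = (t*t)^β * A := by
      rw [hAdef, ← integral_const_mul]
      refine integral_congr_ae (Filter.Eventually.of_forall fun x => ?_)
      show |(t • Φ x) ⬝ᵥ (D x).mulVec (t • Φ x)| ^ β = (t*t)^β * |Φ x ⬝ᵥ (D x).mulVec (Φ x)| ^ β
      rw [Matrix.mulVec_smul, dotProduct_smul, smul_dotProduct, smul_eq_mul, smul_eq_mul,
        ← mul_assoc, abs_mul, abs_of_pos (mul_pos ht ht),
        Real.mul_rpow (mul_pos ht ht).le (abs_nonneg _)]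
    rw [hL, hR2] at hest'
    have hexp : (-θ + -θ) * β = -1 := by
      rw [hθdef]; field_simp; ring
    have htt : (t*t) ^ β = (A+1)⁻¹ := by
      rw [htdef, ← Real.rpow_add hA1, ← Real.rpow_mul hA1.le, hexp]
      exact Real.rpow_neg_one _
    rw [htt] at hest'
    have hfrac : (A+1)⁻¹ * A ≤ 1 := by
      rw [← div_eq_inv_mul]
      exact div_le_one_of_le₀ (by linarith) (by linarith)
    have h2C : t * ∫ x in Ω, |divD x ⬝ᵥ Φ x| ≤ 2 * C := by
      calc t * ∫ x in Ω, |divD x ⬝ᵥ Φ x| ≤ C * ((A+1)⁻¹ * A + 1) := hest'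
        _ ≤ C * 2 := by apply mul_le_mul_of_nonneg_left (by linarith) hC
        _ = 2 * C := by ring
    have htinv : t⁻¹ = (A+1) ^ θ := by
      rw [htdef, ← Real.rpow_neg hA1.le, neg_neg]
    have hLle : ∫ x in Ω, |divD x ⬝ᵥ Φ x| ≤ 2*C * (A+1) ^ θ := by
      have hL2 : ∫ x in Ω, |divD x ⬝ᵥ Φ x| ≤ 2*C / t := by
        rw [le_div_iff₀ ht]
        linarith [h2C]
      calc ∫ x in Ω, |divD x ⬝ᵥ Φ x| ≤ 2*C / t := hL2
        _ = 2*C * (A+1) ^ θ := by rw [div_eq_mul_inv, htinv]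
    calc ∫ x in Ω, |divD x ⬝ᵥ Φ x| ≤ 2*C * (A+1) ^ θ := hLle
      _ ≤ 2*C * (A ^ θ + 1) := by
          apply mul_le_mul_of_nonneg_left (aux_rpow_add_one_le hA0 hθ0.le hθ1.le) (by linarith)
  -- componentwise membership
  have hcomp : ∀ i : Fin n, MemLp (fun x => divD x i)
      (ENNReal.ofReal (2*β/(2*β-1))) (volume.restrict Ω) := by
    intro i
    have helem : Continuous (fun A : Matrix (Fin n) (Fin n) ℝ => A i i) :=
      continuous_id.matrix_elem i i
    have hDii : ContinuousOn (fun x => D x i i) (closure Ω) := helem.comp_continuousOn hDc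
    obtain ⟨Mi, hMi⟩ := hΩb.isCompact_closure.exists_bound_of_continuousOn hDii
    set M' : ℝ := max Mi 0 with hM'def
    have hM'0 : (0:ℝ) ≤ M' := le_max_right _ _
    have hDb : ∀ x ∈ Ω, |D x i i| ≤ M' := fun x hx =>
      (le_max_left _ _).trans' (by simpa [Real.norm_eq_abs] using hMi x (subset_closure hx))
    have hgint : IntegrableOn (fun x => divD x i) Ω := by
      refine Integrable.mono hdivD.norm
        ((continuous_apply i).comp_aestronglyMeasurable hdivD.1) ?_
      refine Filter.Eventually.of_forall fun x => ?_
      rw [norm_norm]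
      exact norm_le_pi_norm (divD x) i
    apply scalarDual hΩm hvol hβ1 hβ2 hgint (c := 2*C*((M'^β) ^ (1/(2*β)) + 1))
    intro K φ hφc hφb
    have hK0 : (0:ℝ) ≤ K := (abs_nonneg _).trans (hφb 0)
    set e : Fin n → ℝ := Pi.single i (1:ℝ) with hedef
    have h1 := hA (fun x => φ x • e)
      (hφc.continuousOn.smul continuousOn_const)
    have e1 : ∀ x, |divD x ⬝ᵥ (φ x • e)| = |divD x i * φ x| := by
      intro x
      rw [hedef, dotProduct_smul, smul_eq_mul, dotProduct_single, mul_one, mul_comm]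
    have e2 : ∀ x, (φ x • e) ⬝ᵥ (D x).mulVec (φ x • e)
        = φ x * φ x * D x i i := by
      intro x
      rw [hedef, Matrix.mulVec_smul, dotProduct_smul, smul_dotProduct, smul_eq_mul, smul_eq_mul,
        Matrix.mulVec_single_one, single_dotProduct, Matrix.col_apply]
      ring
    have h1' : ∫ x in Ω, |divD x i * φ x| ≤
        2*C * ((∫ x in Ω, |φ x * φ x * D x i i| ^ β) ^ θ + 1) := by
      calc ∫ x in Ω, |divD x i * φ x|
          = ∫ x in Ω, |divD x ⬝ᵥ (φ x • e)| :=
            integral_congr_ae (Filter.Eventually.of_forall fun x => (e1 x).symm)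
        _ ≤ 2*C * ((∫ x in Ω, |(φ x • e) ⬝ᵥ (D x).mulVec (φ x • e)| ^ β) ^ θ + 1) := h1
        _ = 2*C * ((∫ x in Ω, |φ x * φ x * D x i i| ^ β) ^ θ + 1) := by
            rw [show (∫ x in Ω, |(φ x • e) ⬝ᵥ (D x).mulVec (φ x • e)| ^ β)
                = ∫ x in Ω, |φ x * φ x * D x i i| ^ β from
              integral_congr_ae (Filter.Eventually.of_forall fun x => by
                show |φ x • e ⬝ᵥ D x *ᵥ φ x • e| ^ β = |φ x * φ x * D x i i| ^ β
                rw [e2 x])]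
    have habs2 : ∀ y : ℝ, (|y| * |y|) ^ β = |y| ^ (2*β) := by
      intro y
      have h2 : |y| * |y| = |y| ^ ((2:ℕ):ℝ) := by rw [Real.rpow_natCast]; ring
      rw [h2, ← Real.rpow_mul (abs_nonneg y)]
      norm_num
    -- integrability facts
    have hcont1 : ContinuousOn (fun x => |φ x * φ x * D x i i| ^ β) Ω := by
      refine ContinuousOn.rpow_const ?_ fun x _ => Or.inr hβ0.le
      exact (((hφc.continuousOn.mul hφc.continuousOn).mul
        (hDii.mono subset_closure)).abs)
    have hptb : ∀ x ∈ Ω, |φ x * φ x * D x i i| ^ β ≤ M'^β * |φ x| ^ (2*β) := by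
      intro x hx
      have hb : |φ x * φ x * D x i i| ≤ M' * (|φ x| * |φ x|) := by
        rw [abs_mul, abs_mul]
        have h1 := abs_nonneg (φ x)
        have h2 := abs_nonneg (D x i i)
        have h3 := hDb x hx
        nlinarith
      calc |φ x * φ x * D x i i| ^ β ≤ (M' * (|φ x| * |φ x|)) ^ β :=
            Real.rpow_le_rpow (abs_nonneg _) hb hβ0.le
        _ = M'^β * (|φ x| * |φ x|) ^ β := Real.mul_rpow hM'0 (by positivity)
        _ = M'^β * |φ x| ^ (2*β) := by rw [habs2]
    have hint2 : IntegrableOn (fun x => M'^β * |φ x| ^ (2*β)) Ω := by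
      refine Integrable.const_mul ?_ _
      refine Integrable.mono' (integrable_const (K ^ (2*β)))
        ((hφc.abs.rpow_const fun x => Or.inr hbpos.le).aestronglyMeasurable) ?_
      refine Filter.Eventually.of_forall fun x => ?_
      rw [Real.norm_eq_abs, abs_of_nonneg (Real.rpow_nonneg (abs_nonneg _) _)]
      exact Real.rpow_le_rpow (abs_nonneg _) (hφb x) hbpos.le
    have hint1 : IntegrableOn (fun x => |φ x * φ x * D x i i| ^ β) Ω := by
      refine Integrable.mono' (integrable_const ((M' * (K * K)) ^ β))
        (hcont1.aestronglyMeasurable hΩm) ?_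
      filter_upwards [ae_restrict_mem hΩm] with x hx
      rw [Real.norm_eq_abs, abs_of_nonneg (Real.rpow_nonneg (abs_nonneg _) _)]
      refine Real.rpow_le_rpow (abs_nonneg _) ?_ hβ0.le
      rw [abs_mul, abs_mul]
      have h1 := abs_nonneg (φ x)
      have h2 := hφb x
      have h3 := hDb x hx
      have h4 := abs_nonneg (D x i i)
      calc |φ x| * |φ x| * |D x i i| ≤ K * K * M' :=
            mul_le_mul (mul_le_mul h2 h2 h1 hK0) h3 h4 (mul_nonneg hK0 hK0)
        _ = M' * (K * K) := by ring
    have hW : ∫ x in Ω, |φ x * φ x * D x i i| ^ β ≤ M'^β * ∫ x in Ω, |φ x| ^ (2*β) := by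
      rw [← integral_const_mul]
      exact setIntegral_mono_on (hf := hint1) (hg := hint2) hΩm hptb
    have hWnn : (0:ℝ) ≤ ∫ x in Ω, |φ x * φ x * D x i i| ^ β :=
      integral_nonneg fun x => Real.rpow_nonneg (abs_nonneg _) _
    have hYnn : (0:ℝ) ≤ ∫ x in Ω, |φ x| ^ (2*β) :=
      integral_nonneg fun x => Real.rpow_nonneg (abs_nonneg _) _
    calc ∫ x in Ω, |divD x i * φ x|
        ≤ 2*C * ((∫ x in Ω, |φ x * φ x * D x i i| ^ β) ^ θ + 1) := h1'
      _ ≤ 2*C * ((M'^β * ∫ x in Ω, |φ x| ^ (2*β)) ^ θ + 1) := by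
          apply mul_le_mul_of_nonneg_left _ (by linarith)
          have := Real.rpow_le_rpow hWnn hW hθ0.le
          linarith
      _ = 2*C * ((M'^β) ^ θ * (∫ x in Ω, |φ x| ^ (2*β)) ^ θ + 1) := by
          rw [Real.mul_rpow (by positivity) hYnn]
      _ ≤ 2*C*((M'^β) ^ (1/(2*β)) + 1) * ((∫ x in Ω, |φ x| ^ (2*β)) ^ (1/(2*β)) + 1) := by
          rw [← hθdef]
          have ha : (0:ℝ) ≤ (M'^β) ^ θ := by positivity
          have hb : (0:ℝ) ≤ (∫ x in Ω, |φ x| ^ (2*β)) ^ θ :=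
            Real.rpow_nonneg hYnn _
          nlinarith
  -- assemble the vector
  have hq2' : (2:ℝ≥0∞) ≤ ENNReal.ofReal (2*β/(2*β-1)) := by
    have h2q : (2:ℝ) ≤ 2*β/(2*β-1) := by rw [le_div_iff₀ hb0]; nlinarith
    calc (2:ℝ≥0∞) = ENNReal.ofReal (2:ℝ) := by norm_num
      _ ≤ _ := ENNReal.ofReal_le_ofReal h2q
  have hvec : MemLp divD (ENNReal.ofReal (2*β/(2*β-1))) (volume.restrict Ω) := by
    have heq : divD = ∑ i : Fin n, (fun x => (divD x i) • (Pi.single i (1:ℝ) : Fin n → ℝ)) := by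
      funext x j
      rw [Finset.sum_apply, Finset.sum_apply]
      simp [Pi.single_apply]
    rw [heq]
    refine memLp_finset_sum' _ fun i _ => ?_
    refine MemLp.of_le_mul (hcomp i)
      (((continuous_apply i).comp_aestronglyMeasurable hdivD.1).smul
        aestronglyMeasurable_const) (c := ‖(Pi.single i (1:ℝ) : Fin n → ℝ)‖) ?_
    refine Filter.Eventually.of_forall fun x => ?_
    rw [norm_smul, Real.norm_eq_abs]
    exact le_of_eq (mul_comm _ _)
  exact ⟨hvec, hvec.mono_exponent hq2'⟩
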